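/- For every n ≥ 1, there are only finitely many tuples (x_0, …, x_n) of integers with 1 ≤ x_0 ≤ x_1 ≤ … ≤ x_n satisfying 1 = 1/x_0 + 1/x_1 + ⋯ + 1/x_n. -/
import Mathlib

lemma egy_key (m : ℕ) : ∀ r : ℚ,
    {x : Fin m → ℕ | (∀ i, 1 ≤ x i) ∧ Monotone x ∧
      (∑ i, (1 : ℚ) / (x i : ℚ)) = r}.Finite := by
  induction m with
  | zero => intro r; exact Set.toFinite _
  | succ m ih =>
    intro r
    rcases le_or_gt r 0 with hr | hr
    · convert Set.finite_empty
      ext x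
      simp only [Set.mem_setOf_eq, Set.mem_empty_iff_false, iff_false, not_and]
      rintro h1 _ hs
      have hpos : (0 : ℚ) < ∑ i, (1 : ℚ) / (x i : ℚ) := by
        apply Finset.sum_pos
        · intro i _
          have h := h1 i
          have : (1 : ℚ) ≤ (x i : ℚ) := by exact_mod_cast h
          positivity
        · exact Finset.univ_nonempty
      rw [hs] at hpos
      linarith
    · set B : ℕ := ⌈(m + 1 : ℚ) / r⌉₊ with hB
      have hsub : {x : Fin (m + 1) → ℕ | (∀ i, 1 ≤ x i) ∧ Monotone x ∧
          (∑ i, (1 : ℚ) / (x i : ℚ)) = r} ⊆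
          ⋃ a ∈ Finset.range (B + 1), (fun p : Fin m → ℕ => Fin.cons a p) ''
            {y : Fin m → ℕ | (∀ i, 1 ≤ y i) ∧ Monotone y ∧
              (∑ i, (1 : ℚ) / (y i : ℚ)) = r - 1 / (a : ℚ)} := by
        rintro x ⟨h1, hmono, hs⟩
        have hx0 : (1 : ℚ) ≤ (x 0 : ℚ) := by exact_mod_cast h1 0
        have hx0pos : (0 : ℚ) < (x 0 : ℚ) := by linarith
        have hbound : ∀ i : Fin (m + 1), (1 : ℚ) / (x i : ℚ) ≤ 1 / (x 0 : ℚ) := by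
          intro i
          have hle : x 0 ≤ x i := hmono (Fin.zero_le i)
          have hle' : (x 0 : ℚ) ≤ (x i : ℚ) := by exact_mod_cast hle
          exact one_div_le_one_div_of_le hx0pos hle'
        have hsum : r ≤ (m + 1 : ℚ) / (x 0 : ℚ) := by
          have := Finset.sum_le_sum (fun i (_ : i ∈ Finset.univ) => hbound i)
          rw [hs, Finset.sum_const, Finset.card_univ, Fintype.card_fin] at this
          calc r ≤ (m + 1 : ℕ) • ((1 : ℚ) / (x 0 : ℚ)) := this
            _ = (m + 1 : ℚ) / (x 0 : ℚ) := by
                push_cast [nsmul_eq_mul]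
                ring
        have hx0B : x 0 ≤ B := by
          have h1' : (x 0 : ℚ) ≤ (m + 1 : ℚ) / r := by
            rw [le_div_iff₀ hr]
            rw [le_div_iff₀ hx0pos] at hsum
            linarith
          have h2' : ((m + 1 : ℚ) / r) ≤ (B : ℚ) := Nat.le_ceil _
          exact_mod_cast h1'.trans h2'
        refine Set.mem_biUnion (Finset.mem_range.mpr (Nat.lt_succ_of_le hx0B)) ?_
        refine ⟨Fin.tail x, ⟨fun i => h1 i.succ, ?_, ?_⟩, Fin.cons_self_tail x⟩
        · intro i j hij
          exact hmono (Fin.succ_le_succ_iff.mpr hij)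
        · have := Fin.sum_univ_succ (fun i => (1 : ℚ) / (x i : ℚ))
          rw [this] at hs
          have : ∑ i : Fin m, (1 : ℚ) / (x i.succ : ℚ) = r - 1 / (x 0 : ℚ) := by
            linarith
          simpa [Fin.tail] using this
      refine Set.Finite.subset ?_ hsub
      refine Set.Finite.biUnion (Finset.range (B + 1)).finite_toSet ?_
      intro a _
      exact (ih (r - 1 / (a : ℚ))).image _

theorem egyptian_fractions_finite (n : ℕ) (hn : 1 ≤ n) :
    {x : Fin (n + 1) → ℕ | (∀ i, 1 ≤ x i) ∧ (∀ i j, i ≤ j → x i ≤ x j) ∧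
      (∑ i, (1 : ℚ) / (x i : ℚ)) = 1}.Finite := by
  refine Set.Finite.subset (egy_key (n + 1) 1) ?_
  rintro x ⟨h1, h2, h3⟩
  exact ⟨h1, fun i j hij => h2 i j hij, h3⟩
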